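/- Let p ∈ (1,∞) and p' = p/(p−1). There exist constants K, K' depending only on p (uniform in the shift a ≥ 0 and in δ ≥ 0) such that for all a ≥ 0, δ ≥ 0 and t ≥ 0 one has φ_a(2t) ≤ K·φ_a(t) and (φ_a)*(2t) ≤ K'·(φ_a)*(t), with K ≤ c·2^{max{2,p}} and K' ≤ c·2^{max{2,p'}}; i.e., the families {φ_a}_{a ≥ 0} and {(φ_a)*}_{a ≥ 0} satisfy the Δ₂-condition uniformly in a ≥ 0. -/

import Mathlib

/-- The derivative `φ'(t) = (δ+t)^(p-2)·t` of the N-function `φ = φ_{p,δ}`. -/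
noncomputable def phiDeriv (p δ t : ℝ) : ℝ := (δ + t) ^ (p - 2) * t

/-- The shifted N-function `φ_a(t) = ∫₀ᵗ φ'(a+s)·s/(a+s) ds`. -/
noncomputable def phiShift (p δ a t : ℝ) : ℝ :=
  ∫ s in (0:ℝ)..t, phiDeriv p δ (a + s) * s / (a + s)

/-- The convex conjugate of an N-function: `ψ*(s) = sup_{t ≥ 0} (s·t − ψ(t))`. -/
noncomputable def conjFun (ψ : ℝ → ℝ) (s : ℝ) : ℝ :=
  sSup ((fun t => s * t - ψ t) '' Set.Ici 0)

open Set MeasureTheory intervalIntegral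

namespace PhiShiftAux

/-- Core monotonicity of `s ↦ (b+s)^(p-2) s` on `[0,∞)`. -/
lemma core_mono (p b : ℝ) (hp : 1 < p) (hb : 0 ≤ b) {x y : ℝ} (hx : 0 ≤ x) (hxy : x ≤ y) :
    (b + x) ^ (p - 2) * x ≤ (b + y) ^ (p - 2) * y := by
  rcases eq_or_lt_of_le hx with h0 | h0
  · have : (0:ℝ) ≤ (b + y) ^ (p - 2) * y :=
      mul_nonneg (Real.rpow_nonneg (by linarith) _) (by linarith)
    simpa [← h0] using this
  · have hbx : 0 < b + x := by linarith
    have hby : 0 < b + y := by linarith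
    rcases le_or_gt 2 p with h2 | h2
    · exact mul_le_mul (Real.rpow_le_rpow hbx.le (by linarith) (by linarith)) hxy h0.le
        (Real.rpow_nonneg hby.le _)
    · have ex : (b + x) ^ (p - 2) * (b + x) = (b + x) ^ (p - 1) := by
        rw [show p - 1 = p - 2 + 1 by ring, Real.rpow_add_one hbx.ne']
      have ey : (b + y) ^ (p - 2) * (b + y) = (b + y) ^ (p - 1) := by
        rw [show p - 1 = p - 2 + 1 by ring, Real.rpow_add_one hby.ne']
      have h1 : (b + x) ^ (p - 1) ≤ (b + y) ^ (p - 1) :=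
        Real.rpow_le_rpow hbx.le (by linarith) (by linarith)
      have h2' : (b + y) ^ (p - 2) ≤ (b + x) ^ (p - 2) :=
        Real.rpow_le_rpow_of_nonpos hbx (by linarith) (by linarith)
      have h3 : b * (b + y) ^ (p - 2) ≤ b * (b + x) ^ (p - 2) :=
        mul_le_mul_of_nonneg_left h2' hb
      nlinarith [ex, ey]

/-- Interval integrability of `s ↦ (b+s)^(p-2) s` on `[0,t]`. -/
lemma intInt (p b : ℝ) (hp : 1 < p) (hb : 0 ≤ b) {t : ℝ} (ht : 0 ≤ t) :
    IntervalIntegrable (fun s => (b + s) ^ (p - 2) * s) volume 0 t := by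
  apply MonotoneOn.intervalIntegrable
  intro x hx y _ hxy
  rw [uIcc_of_le ht] at hx
  exact core_mono p b hp hb hx.1 hxy

/-- Rewriting `phiShift` as the integral of `(δ+a+s)^(p-2) s`. -/
lemma phiShift_eq (p δ a : ℝ) (ha : 0 ≤ a) {t : ℝ} (ht : 0 ≤ t) :
    phiShift p δ a t = ∫ s in (0:ℝ)..t, ((δ + a) + s) ^ (p - 2) * s := by
  unfold phiShift
  apply intervalIntegral.integral_congr
  intro s hs
  rw [uIcc_of_le ht] at hs
  unfold phiDeriv
  rcases eq_or_lt_of_le (by linarith [hs.1] : (0:ℝ) ≤ a + s) with h | h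
  · have hs0 : s = 0 := by linarith [hs.1]
    have ha0 : a = 0 := by linarith [hs.1]
    simp [hs0, ha0]
  · show (δ + (a + s)) ^ (p - 2) * (a + s) * s / (a + s) = ((δ + a) + s) ^ (p - 2) * s
    have hδa : δ + (a + s) = (δ + a) + s := by ring
    rw [hδa]
    field_simp

/-- Pointwise inequality giving the Δ₂-condition. -/
lemma ptwise1 (p b : ℝ) (hp : 1 < p) (hb : 0 ≤ b) {u : ℝ} (hu : 0 ≤ u) :
    (b + 2 * u) ^ (p - 2) * (2 * u) ≤
      2 * (2:ℝ) ^ (max 0 (p - 2)) * ((b + u) ^ (p - 2) * u) := by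
  rcases eq_or_lt_of_le hu with h0 | h0
  · simp [← h0]
  · have hbu : 0 < b + u := by linarith
    have hb2u : 0 < b + 2 * u := by linarith
    rcases le_or_gt 2 p with h2 | h2
    · rw [max_eq_right (by linarith : (0:ℝ) ≤ p - 2)]
      have h1 : (b + 2 * u) ^ (p - 2) ≤ (2 * (b + u)) ^ (p - 2) :=
        Real.rpow_le_rpow hb2u.le (by linarith) (by linarith)
      rw [Real.mul_rpow (by norm_num) hbu.le] at h1
      have h2u : (0:ℝ) ≤ 2 * u := by linarith
      have := mul_le_mul_of_nonneg_right h1 h2u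
      nlinarith [Real.rpow_nonneg hbu.le (p - 2)]
    · rw [max_eq_left (by linarith : p - 2 ≤ (0:ℝ)), Real.rpow_zero]
      have h1 : (b + 2 * u) ^ (p - 2) ≤ (b + u) ^ (p - 2) :=
        Real.rpow_le_rpow_of_nonpos hbu (by linarith) (by linarith)
      nlinarith [Real.rpow_nonneg hbu.le (p - 2)]

/-- Pointwise inequality giving the superhomogeneity (hence `∇₂`). -/
lemma ptwise2 (p b : ℝ) (hp : 1 < p) (hb : 0 ≤ b) {v : ℝ} (hv : 0 ≤ v) :
    2 * ((b + v) ^ (p - 2) * v) ≤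
      (b + (2:ℝ) ^ (max 1 (1 / (p - 1))) * v) ^ (p - 2) *
        ((2:ℝ) ^ (max 1 (1 / (p - 1))) * v) := by
  set l : ℝ := (2:ℝ) ^ (max 1 (1 / (p - 1))) with hl
  have hl2 : 2 ≤ l := by
    calc (2:ℝ) = 2 ^ (1:ℝ) := (Real.rpow_one 2).symm
    _ ≤ l := Real.rpow_le_rpow_of_exponent_le one_le_two (le_max_left _ _)
  have hl0 : 0 < l := by linarith
  rcases eq_or_lt_of_le hv with h0 | h0
  · simp [← h0]
  · have hbv : 0 < b + v := by linarith
    have hblv : 0 < b + l * v := by nlinarith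
    rcases le_or_gt 2 p with h2 | h2
    · have h1 : (b + v) ^ (p - 2) ≤ (b + l * v) ^ (p - 2) :=
        Real.rpow_le_rpow hbv.le (by nlinarith) (by linarith)
      have hA0 : 0 ≤ (b + v) ^ (p - 2) := Real.rpow_nonneg hbv.le _
      calc 2 * ((b + v) ^ (p - 2) * v) = (b + v) ^ (p - 2) * (2 * v) := by ring
        _ ≤ (b + v) ^ (p - 2) * (l * v) := mul_le_mul_of_nonneg_left (by nlinarith) hA0
        _ ≤ (b + l * v) ^ (p - 2) * (l * v) :=
            mul_le_mul_of_nonneg_right h1 (by positivity)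
    · have hp1 : 0 < p - 1 := by linarith
      have hmax : max 1 (1 / (p - 1)) = 1 / (p - 1) := by
        rw [max_eq_right]
        rw [le_div_iff₀ hp1]
        linarith
      have hlp : l ^ (p - 1) = 2 := by
        rw [hl, hmax, ← Real.rpow_mul (by norm_num : (0:ℝ) ≤ 2),
          one_div_mul_cancel hp1.ne', Real.rpow_one]
      have h1 : l ^ (p - 2) * (b + v) ^ (p - 2) ≤ (b + l * v) ^ (p - 2) := by
        have h := Real.rpow_le_rpow_of_nonpos hblv
          (by nlinarith : b + l * v ≤ l * (b + v)) (by linarith : p - 2 ≤ 0)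
        rwa [Real.mul_rpow hl0.le hbv.le] at h
      have h2' : l ^ (p - 2) * l = 2 := by
        rw [← Real.rpow_add_one hl0.ne', show p - 2 + 1 = p - 1 by ring, hlp]
      have h3 := mul_le_mul_of_nonneg_right h1
        (by positivity : (0:ℝ) ≤ l * v)
      have h4 : l ^ (p - 2) * (b + v) ^ (p - 2) * (l * v)
          = (l ^ (p - 2) * l) * ((b + v) ^ (p - 2) * v) := by ring
      rw [h4, h2'] at h3
      exact h3

/-- The Δ₂-estimate for `ψ_b(t) = ∫₀ᵗ (b+s)^(p-2) s ds`. -/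
lemma delta2 (p b : ℝ) (hp : 1 < p) (hb : 0 ≤ b) {t : ℝ} (ht : 0 ≤ t) :
    (∫ s in (0:ℝ)..(2 * t), (b + s) ^ (p - 2) * s) ≤
      (2:ℝ) ^ (max 2 p) * ∫ s in (0:ℝ)..t, (b + s) ^ (p - 2) * s := by
  have h2t : (0:ℝ) ≤ 2 * t := by linarith
  have key : (∫ s in (0:ℝ)..(2 * t), (b + s) ^ (p - 2) * s)
      = 2 * ∫ x in (0:ℝ)..t, (fun s => (b + s) ^ (p - 2) * s) (2 * x) := by
    have h := smul_integral_comp_mul_left (a := 0) (b := t)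
      (fun s => (b + s) ^ (p - 2) * s) 2
    rw [mul_zero] at h
    rw [← h, smul_eq_mul]
  have int1 : IntervalIntegrable (fun x => (fun s => (b + s) ^ (p - 2) * s) (2 * x))
      volume 0 t := by
    have h := (intInt p b hp hb h2t).comp_mul_left (c := 2)
    rwa [zero_div, mul_div_cancel_left₀ t (by norm_num : (2:ℝ) ≠ 0)] at h
  have int2 : IntervalIntegrable
      (fun x => 2 * (2:ℝ) ^ (max 0 (p - 2)) * ((b + x) ^ (p - 2) * x)) volume 0 t :=
    (intInt p b hp hb ht).const_mul _
  have mono : (∫ x in (0:ℝ)..t, (fun s => (b + s) ^ (p - 2) * s) (2 * x))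
      ≤ ∫ x in (0:ℝ)..t, 2 * (2:ℝ) ^ (max 0 (p - 2)) * ((b + x) ^ (p - 2) * x) := by
    apply integral_mono_on ht int1 int2
    intro x hx
    exact ptwise1 p b hp hb hx.1
  have hconst : (2:ℝ) * (2 * (2:ℝ) ^ (max 0 (p - 2))) = (2:ℝ) ^ (max 2 p) := by
    have h4 : (2:ℝ) ^ (2:ℝ) = 4 := by
      have h := Real.rpow_natCast (2:ℝ) 2
      rw [Nat.cast_ofNat] at h
      rw [h]; norm_num
    have hm : (2:ℝ) ^ (max 2 p) = (2:ℝ) ^ ((2:ℝ) + max 0 (p - 2)) := by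
      congr 1
      rcases le_total 2 p with h | h
      · rw [max_eq_right h, max_eq_right (by linarith : (0:ℝ) ≤ p - 2)]; ring
      · rw [max_eq_left h, max_eq_left (by linarith : p - 2 ≤ (0:ℝ))]; ring
    rw [hm, Real.rpow_add two_pos, h4]
    ring
  calc (∫ s in (0:ℝ)..(2 * t), (b + s) ^ (p - 2) * s)
      = 2 * ∫ x in (0:ℝ)..t, (fun s => (b + s) ^ (p - 2) * s) (2 * x) := key
    _ ≤ 2 * ∫ x in (0:ℝ)..t, 2 * (2:ℝ) ^ (max 0 (p - 2)) * ((b + x) ^ (p - 2) * x) := by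
        linarith [mono]
    _ = 2 * (2 * (2:ℝ) ^ (max 0 (p - 2)) * ∫ x in (0:ℝ)..t, (b + x) ^ (p - 2) * x) := by
        rw [intervalIntegral.integral_const_mul]
    _ = (2:ℝ) ^ (max 2 p) * ∫ s in (0:ℝ)..t, (b + s) ^ (p - 2) * s := by
        rw [← hconst]; ring

/-- Superhomogeneity: `2 λ ψ_b(u) ≤ ψ_b(λ u)` for `λ = 2^{max 1 (1/(p-1))}`. -/
lemma superhom (p b : ℝ) (hp : 1 < p) (hb : 0 ≤ b) {u : ℝ} (hu : 0 ≤ u) :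
    2 * (2:ℝ) ^ (max 1 (1 / (p - 1))) * ∫ s in (0:ℝ)..u, (b + s) ^ (p - 2) * s ≤
      ∫ s in (0:ℝ)..((2:ℝ) ^ (max 1 (1 / (p - 1))) * u), (b + s) ^ (p - 2) * s := by
  set l : ℝ := (2:ℝ) ^ (max 1 (1 / (p - 1))) with hl
  have hl0 : 0 < l := Real.rpow_pos_of_pos two_pos _
  have hlu : (0:ℝ) ≤ l * u := mul_nonneg hl0.le hu
  have key : (∫ s in (0:ℝ)..(l * u), (b + s) ^ (p - 2) * s)
      = l * ∫ x in (0:ℝ)..u, (fun s => (b + s) ^ (p - 2) * s) (l * x) := by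
    have h := smul_integral_comp_mul_left (a := 0) (b := u)
      (fun s => (b + s) ^ (p - 2) * s) l
    rw [mul_zero] at h
    rw [← h, smul_eq_mul]
  have int1 : IntervalIntegrable (fun x => 2 * ((b + x) ^ (p - 2) * x)) volume 0 u :=
    (intInt p b hp hb hu).const_mul 2
  have int2 : IntervalIntegrable (fun x => (fun s => (b + s) ^ (p - 2) * s) (l * x))
      volume 0 u := by
    have h := (intInt p b hp hb hlu).comp_mul_left (c := l)
    rwa [zero_div, mul_div_cancel_left₀ u hl0.ne'] at h
  have mono : (∫ x in (0:ℝ)..u, 2 * ((b + x) ^ (p - 2) * x))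
      ≤ ∫ x in (0:ℝ)..u, (fun s => (b + s) ^ (p - 2) * s) (l * x) := by
    apply integral_mono_on hu int1 int2
    intro x hx
    exact ptwise2 p b hp hb hx.1
  rw [key]
  rw [intervalIntegral.integral_const_mul] at mono
  nlinarith [mono]

/-- Abstract Δ₂-estimate for the conjugate from superhomogeneity. -/
lemma conj_le (ψ : ℝ → ℝ) (l t : ℝ) (hl : 1 ≤ l) (ht : 0 ≤ t) (hψ0 : ψ 0 = 0)
    (hsh : ∀ u, 0 ≤ u → 2 * l * ψ u ≤ ψ (l * u)) :
    conjFun ψ (2 * t) ≤ 2 * l * conjFun ψ t := by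
  unfold conjFun
  set A := (fun x => t * x - ψ x) '' Set.Ici 0 with hA'
  by_cases hA : BddAbove A
  · have h0A : (0:ℝ) ∈ A := ⟨0, Set.self_mem_Ici, by simp [hψ0]⟩
    have hA0 : 0 ≤ sSup A := le_csSup hA h0A
    apply Real.sSup_le
    · rintro x ⟨s, hs, rfl⟩
      have hs0 : (0:ℝ) ≤ s := hs
      have hl0 : (0:ℝ) < l := by linarith
      have hu0 : 0 ≤ s / l := div_nonneg hs0 hl0.le
      have hsu : s = l * (s / l) := by field_simp
      have h1 : t * (s / l) - ψ (s / l) ≤ sSup A := le_csSup hA ⟨s / l, hu0, rfl⟩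
      have h2 := hsh (s / l) hu0
      have hscal : 2 * l * (t * (s / l)) = 2 * t * s := by field_simp
      calc (2 * t) * s - ψ s = 2 * l * (t * (s / l)) - ψ (l * (s / l)) := by
            rw [← hsu, hscal]
        _ ≤ 2 * l * (t * (s / l)) - 2 * l * ψ (s / l) := by linarith
        _ = (2 * l) * (t * (s / l) - ψ (s / l)) := by ring
        _ ≤ 2 * l * sSup A := mul_le_mul_of_nonneg_left h1 (by linarith)
    · exact mul_nonneg (by linarith) hA0
  · have hB : ¬ BddAbove ((fun x => (2 * t) * x - ψ x) '' Set.Ici 0) := by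
      rintro ⟨M, hM⟩
      apply hA
      refine ⟨M, ?_⟩
      rintro x ⟨s, hs, rfl⟩
      have h1 : (2 * t) * s - ψ s ≤ M := hM ⟨s, hs, rfl⟩
      have hts : 0 ≤ t * s := mul_nonneg ht hs
      simp only
      linarith
    rw [Real.sSup_of_not_bddAbove hA, Real.sSup_of_not_bddAbove hB]
    simp

end PhiShiftAux

open PhiShiftAux in
/-- For `p ∈ (1,∞)` and `p' = p/(p−1)` there exist constants `K, K'` depending only
on `p` (uniform in the shift `a ≥ 0` and in `δ ≥ 0`), with `K ≤ c·2^{max{2,p}}` and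
`K' ≤ c·2^{max{2,p'}}`, such that for all `a ≥ 0`, `δ ≥ 0`, `t ≥ 0`:
`φ_a(2t) ≤ K·φ_a(t)` and `(φ_a)*(2t) ≤ K'·(φ_a)*(t)`; i.e., the families
`{φ_a}` and `{(φ_a)*}` satisfy the Δ₂-condition uniformly in `a ≥ 0`. -/
theorem phiShift_Delta2_uniform (p : ℝ) (hp : 1 < p) :
    ∃ K K' c : ℝ, 0 < K ∧ 0 < K' ∧ 0 < c ∧
      K ≤ c * 2 ^ (max 2 p) ∧ K' ≤ c * 2 ^ (max 2 (p / (p - 1))) ∧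
      ∀ a : ℝ, 0 ≤ a → ∀ δ : ℝ, 0 ≤ δ → ∀ t : ℝ, 0 ≤ t →
        phiShift p δ a (2 * t) ≤ K * phiShift p δ a t ∧
        conjFun (phiShift p δ a) (2 * t) ≤ K' * conjFun (phiShift p δ a) t := by
  have hp1 : 0 < p - 1 := by linarith
  refine ⟨2 ^ (max 2 p), 2 ^ (max 2 (p / (p - 1))), 1,
    Real.rpow_pos_of_pos two_pos _, Real.rpow_pos_of_pos two_pos _, one_pos,
    le_of_eq (one_mul _).symm, le_of_eq (one_mul _).symm, ?_⟩
  intro a ha δ hδ t ht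
  have hb : (0:ℝ) ≤ δ + a := by linarith
  constructor
  · rw [phiShift_eq p δ a ha (by linarith : (0:ℝ) ≤ 2 * t), phiShift_eq p δ a ha ht]
    exact delta2 p (δ + a) hp hb ht
  · set l : ℝ := (2:ℝ) ^ (max 1 (1 / (p - 1))) with hl
    have hl1 : 1 ≤ l := by
      calc (1:ℝ) = 2 ^ (0:ℝ) := (Real.rpow_zero 2).symm
      _ ≤ l := Real.rpow_le_rpow_of_exponent_le one_le_two
        (le_trans zero_le_one (le_max_left _ _))
    have hK' : (2:ℝ) ^ (max 2 (p / (p - 1))) = 2 * l := by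
      have hq : p / (p - 1) = 1 + 1 / (p - 1) := by field_simp; ring
      have hm : max 2 (p / (p - 1)) = 1 + max 1 (1 / (p - 1)) := by
        rcases le_total (1 / (p - 1)) 1 with h | h
        · rw [max_eq_left (by rw [hq]; linarith), max_eq_left h]; norm_num
        · rw [max_eq_right (by rw [hq]; linarith), max_eq_right h, hq]
      rw [hm, Real.rpow_add two_pos, Real.rpow_one, ← hl]
    rw [hK']
    apply conj_le (phiShift p δ a) l t hl1 ht
    · unfold phiShift
      exact intervalIntegral.integral_same
    · intro u hu
      have hlu : (0:ℝ) ≤ l * u := mul_nonneg (by linarith) hu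
      rw [phiShift_eq p δ a ha hu, phiShift_eq p δ a ha hlu]
      exact superhom p (δ + a) hp hb hu
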